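/- Let v be a nonnegative integrable random variable on a probability space with P(v > x) > 0 for all x ≥ 0, and let F̄(x) = P(v > x). If F̄ is rapidly varying with index −∞, then H(x) = E[v·1_{v>x}] is rapidly varying with index −∞ (i.e., for every t > 1, lim_{x→∞} H(tx)/H(x) = 0), and consequently S(x) = 1/E[v·1_{v>x}] satisfies lim_{x→∞} S(tx)/S(x) = ∞ for every t > 1. -/

import Mathlib

open MeasureTheory Filter Set

section aux
set_option linter.unusedSectionVars false
set_option linter.unusedVariables false

variable {Ω : Type*} [MeasurableSpace Ω] {μ : Measure Ω} [IsProbabilityMeasure μ]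
  {v : Ω → ℝ}

lemma measA (hvm : Measurable v) (x : ℝ) : MeasurableSet {ω | x < v ω} :=
  measurableSet_lt measurable_const hvm

lemma intA (hvm : Measurable v) (hv : Integrable v μ) (x : ℝ) :
    Integrable (Set.indicator {ω | x < v ω} v) μ :=
  hv.indicator (measA hvm x)

lemma G_nonneg (hv0 : ∀ ω, 0 ≤ v ω) (x : ℝ) :
    0 ≤ ∫ ω, Set.indicator {ω | x < v ω} v ω ∂μ :=
  integral_nonneg fun ω => Set.indicator_nonneg (fun ω _ => hv0 ω) ω

lemma G_anti (hvm : Measurable v) (hv : Integrable v μ) (hv0 : ∀ ω, 0 ≤ v ω) {y z : ℝ}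
    (hyz : y ≤ z) :
    ∫ ω, Set.indicator {ω | z < v ω} v ω ∂μ ≤ ∫ ω, Set.indicator {ω | y < v ω} v ω ∂μ := by
  refine integral_mono (intA hvm hv z) (intA hvm hv y) fun ω => ?_
  exact Set.indicator_le_indicator_of_subset (fun ω hω => lt_of_le_of_lt hyz hω) (fun ω => hv0 ω) ω

lemma G_lower (hvm : Measurable v) (hv : Integrable v μ) {y : ℝ} (hy : 0 ≤ y) :
    y * (μ {ω | y < v ω}).toReal ≤ ∫ ω, Set.indicator {ω | y < v ω} v ω ∂μ := by
  rw [integral_indicator (measA hvm y)]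
  calc y * (μ {ω | y < v ω}).toReal = ∫ _ in {ω | y < v ω}, y ∂μ := by
        rw [setIntegral_const, smul_eq_mul, measureReal_def]; ring
    _ ≤ ∫ ω in {ω | y < v ω}, v ω ∂μ :=
        setIntegral_mono_on (integrableOn_const (measure_ne_top _ _))
          hv.integrableOn (measA hvm y) fun ω hω => le_of_lt hω

lemma G_diff (hvm : Measurable v) (hv : Integrable v μ) (hv0 : ∀ ω, 0 ≤ v ω) {y z : ℝ}
    (hyz : y ≤ z) (hz : 0 ≤ z) :
    (∫ ω, Set.indicator {ω | y < v ω} v ω ∂μ) - ∫ ω, Set.indicator {ω | z < v ω} v ω ∂μ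
      ≤ z * (μ {ω | y < v ω}).toReal := by
  rw [← integral_sub (intA hvm hv y) (intA hvm hv z)]
  have h1 : ∀ ω, Set.indicator {ω | y < v ω} v ω - Set.indicator {ω | z < v ω} v ω
      ≤ Set.indicator {ω | y < v ω} (fun _ => z) ω := by
    intro ω
    by_cases h2 : z < v ω
    · have h3 : y < v ω := lt_of_le_of_lt hyz h2
      simp [Set.indicator_of_mem, h2, h3, hz]
    · by_cases h3 : y < v ω
      · have m1 : ω ∈ {ω' | y < v ω'} := h3
        have m2 : ω ∉ {ω' | z < v ω'} := h2
        rw [Set.indicator_of_mem m1, Set.indicator_of_notMem m2, Set.indicator_of_mem m1,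
          sub_zero]
        exact le_of_not_gt h2
      · simp [Set.indicator_of_notMem, h2, h3]
  calc (∫ ω, (Set.indicator {ω | y < v ω} v ω - Set.indicator {ω | z < v ω} v ω) ∂μ)
      ≤ ∫ ω, Set.indicator {ω | y < v ω} (fun _ => z) ω ∂μ := by
        refine integral_mono ((intA hvm hv y).sub (intA hvm hv z)) ?_ h1
        exact (integrable_const z).indicator (measA hvm y)
    _ = z * (μ {ω | y < v ω}).toReal := by
        rw [integral_indicator (measA hvm y), setIntegral_const, smul_eq_mul, measureReal_def]; ring

lemma G_tendsto (hvm : Measurable v) (hv : Integrable v μ) (hv0 : ∀ ω, 0 ≤ v ω) :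
    Tendsto (fun y => ∫ ω, Set.indicator {ω | y < v ω} v ω ∂μ) atTop (nhds 0) := by
  have := MeasureTheory.tendsto_integral_filter_of_dominated_convergence (μ := μ)
    (F := fun y ω => Set.indicator {ω | y < v ω} v ω) (f := fun _ => (0:ℝ)) (bound := v)
    (l := atTop)
    (Eventually.of_forall fun y => ((intA hvm hv y).aestronglyMeasurable))
    (Eventually.of_forall fun y => ae_of_all μ fun ω => ?_)
    hv
    (ae_of_all μ fun ω => ?_)
  · simpa using this
  · rw [Real.norm_eq_abs, abs_of_nonneg (Set.indicator_nonneg (fun ω _ => hv0 ω) ω)]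
    exact Set.indicator_le_self' (fun ω _ => hv0 ω) ω
  · refine tendsto_nhds_of_eventually_eq ?_
    filter_upwards [eventually_ge_atTop (v ω)] with y hy
    exact Set.indicator_of_notMem (by simpa using hy) _
end aux

/-- If the tail `F̄ x = P(v > x)` of a nonnegative integrable random variable `v` with
`P(v > x) > 0` for all `x ≥ 0` is rapidly varying with index `-∞`, then
`H x = E[v · 1_{v > x}]` is rapidly varying with index `-∞` and consequently
`S x = 1 / H x` satisfies `S (t x) / S x → ∞` for every `t > 1`. -/
theorem stmt1 {Ω : Type*} [MeasurableSpace Ω] (μ : Measure Ω) [IsProbabilityMeasure μ]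
    (v : Ω → ℝ) (hvm : Measurable v) (hv : Integrable v μ) (hv0 : ∀ ω, 0 ≤ v ω)
    (Fbar : ℝ → ℝ) (hFbar : ∀ x, Fbar x = (μ {ω | x < v ω}).toReal)
    (hpos : ∀ x : ℝ, 0 ≤ x → 0 < Fbar x)
    (hrv : ∀ t : ℝ, 1 < t → Tendsto (fun x => Fbar (t * x) / Fbar x) atTop (nhds 0))
    (H : ℝ → ℝ) (hH : ∀ x, H x = ∫ ω, Set.indicator {ω | x < v ω} v ω ∂μ)
    (S : ℝ → ℝ) (hS : ∀ x, S x = 1 / H x) :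
    (∀ t : ℝ, 1 < t → Tendsto (fun x => H (t * x) / H x) atTop (nhds 0)) ∧
      (∀ t : ℝ, 1 < t → Tendsto (fun x => S (t * x) / S x) atTop atTop) := by
  have hFnn : ∀ x, 0 ≤ Fbar x := fun x => (hFbar x) ▸ ENNReal.toReal_nonneg
  have hlow : ∀ y : ℝ, 0 ≤ y → y * Fbar y ≤ H y := by
    intro y hy; rw [hH, hFbar]; exact G_lower hvm hv hy
  have hHnn : ∀ y, 0 ≤ H y := fun y => (hH y) ▸ G_nonneg hv0 y
  have hanti : ∀ {y z : ℝ}, y ≤ z → H z ≤ H y := by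
    intro y z hyz; rw [hH, hH]; exact G_anti hvm hv hv0 hyz
  have hdiff : ∀ {y z : ℝ}, y ≤ z → 0 ≤ z → H y - H z ≤ z * Fbar y := by
    intro y z h1 h2; rw [hH, hH, hFbar]; exact G_diff hvm hv hv0 h1 h2
  have hHpos : ∀ y : ℝ, 0 ≤ y → 0 < H y := by
    intro y hy
    have h1 : (y + 1) * Fbar (y + 1) ≤ H (y + 1) := hlow _ (by linarith)
    have h2 : 0 < Fbar (y + 1) := hpos _ (by linarith)
    have h3 : H (y + 1) ≤ H y := hanti (by linarith)
    nlinarith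
  have hHtend : Tendsto H atTop (nhds 0) :=
    (G_tendsto hvm hv hv0).congr fun y => (hH y).symm
  have main : ∀ t : ℝ, 1 < t → Tendsto (fun x => H (t * x) / H x) atTop (nhds 0) := by
    intro t ht
    have ht0 : 0 < t := lt_trans one_pos ht
    rw [NormedAddCommGroup.tendsto_nhds_zero]
    intro δ hδ
    set ε : ℝ := min (δ / (4 * t ^ 2)) (1 / (2 * t)) with hεdef
    have hε0 : 0 < ε := lt_min (by positivity) (by positivity)
    have hε1 : ε ≤ δ / (4 * t ^ 2) := min_le_left _ _
    have hε2 : t * ε ≤ 1 / 2 := by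
      have h := min_le_right (δ / (4 * t ^ 2)) (1 / (2 * t))
      have : t * ε ≤ t * (1 / (2 * t)) := by
        apply mul_le_mul_of_nonneg_left _ ht0.le
        exact h
      calc t * ε ≤ t * (1 / (2 * t)) := this
        _ = 1 / 2 := by field_simp
    obtain ⟨x₀, hx₀⟩ := eventually_atTop.1 ((hrv t ht).eventually_lt_const hε0)
    filter_upwards [eventually_ge_atTop (max x₀ 1)] with x hx
    have hx1 : (1 : ℝ) ≤ x := le_trans (le_max_right _ _) hx
    have hxx0 : x₀ ≤ x := le_trans (le_max_left _ _) hx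
    have hxpos : (0 : ℝ) < x := by linarith
    have hratio : ∀ z : ℝ, x ≤ z → Fbar (t * z) ≤ ε * Fbar z := by
      intro z hz
      have hz0 : (0 : ℝ) ≤ z := by linarith
      have h1 : Fbar (t * z) / Fbar z < ε := hx₀ z (le_trans hxx0 hz)
      have h2 : 0 < Fbar z := hpos z hz0
      have := (div_le_iff₀ h2).1 h1.le
      linarith [this]
    have hgeo : ∀ k : ℕ, Fbar (t ^ k * x) ≤ ε ^ k * Fbar x := by
      intro k
      induction k with
      | zero => simp
      | succ k ih =>
        have hxk : x ≤ t ^ k * x :=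
          le_mul_of_one_le_left hxpos.le (one_le_pow₀ ht.le)
        have h1 := hratio (t ^ k * x) hxk
        have h2 : Fbar (t ^ (k + 1) * x) = Fbar (t * (t ^ k * x)) := by ring_nf
        calc Fbar (t ^ (k + 1) * x) = Fbar (t * (t ^ k * x)) := h2
          _ ≤ ε * Fbar (t ^ k * x) := h1
          _ ≤ ε * (ε ^ k * Fbar x) := mul_le_mul_of_nonneg_left ih hε0.le
          _ = ε ^ (k + 1) * Fbar x := by ring
    have hsum : ∀ N : ℕ, H (t * x) ≤
        (∑ k ∈ Finset.range N, t ^ (k + 2) * ε ^ (k + 1) * x * Fbar x) + H (t ^ (N + 1) * x) := by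
      intro N
      induction N with
      | zero =>
        simp [pow_one]
      | succ N ih =>
        have h1 : t ^ (N + 1) * x ≤ t ^ (N + 2) * x := by
          have h0 : t ^ (N + 1) ≤ t ^ (N + 2) := pow_le_pow_right₀ ht.le (by omega)
          nlinarith
        have h2 : (0 : ℝ) ≤ t ^ (N + 2) * x := by positivity
        have key := hdiff h1 h2
        have key2 : Fbar (t ^ (N + 1) * x) ≤ ε ^ (N + 1) * Fbar x := hgeo (N + 1)
        have h3 : t ^ (N + 2) * x * Fbar (t ^ (N + 1) * x)
            ≤ t ^ (N + 2) * ε ^ (N + 1) * x * Fbar x := by nlinarith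
        rw [Finset.sum_range_succ]
        linarith
    have hsumle : ∀ N : ℕ,
        (∑ k ∈ Finset.range N, t ^ (k + 2) * ε ^ (k + 1) * x * Fbar x)
          ≤ 2 * t ^ 2 * ε * x * Fbar x := by
      intro N
      have heq : (∑ k ∈ Finset.range N, t ^ (k + 2) * ε ^ (k + 1) * x * Fbar x)
          = t ^ 2 * ε * x * Fbar x * ∑ k ∈ Finset.range N, (t * ε) ^ k := by
        rw [Finset.mul_sum]
        refine Finset.sum_congr rfl fun k _ => ?_
        rw [mul_pow, pow_add, pow_add, pow_one]
        ring
      have hgs : (∑ k ∈ Finset.range N, (t * ε) ^ k) ≤ 2 := by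
        calc (∑ k ∈ Finset.range N, (t * ε) ^ k)
            ≤ ∑ k ∈ Finset.range N, ((1 : ℝ) / 2) ^ k :=
              Finset.sum_le_sum fun k _ => pow_le_pow_left₀ (by positivity) hε2 k
          _ ≤ 2 := sum_geometric_two_le N
      rw [heq]
      have hnn : (0 : ℝ) ≤ t ^ 2 * ε * x * Fbar x := by
        have := hFnn x; positivity
      nlinarith
    have hlim : Tendsto (fun N : ℕ => H (t ^ (N + 1) * x)) atTop (nhds 0) := by
      have h1 : Tendsto (fun N : ℕ => t ^ (N + 1) * x) atTop atTop := by
        apply Tendsto.atTop_mul_const hxpos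
        exact (tendsto_pow_atTop_atTop_of_one_lt ht).comp (tendsto_add_atTop_nat 1)
      exact hHtend.comp h1
    have hHtxle : H (t * x) ≤ 2 * t ^ 2 * ε * x * Fbar x := by
      have h1 : Tendsto (fun N : ℕ => 2 * t ^ 2 * ε * x * Fbar x + H (t ^ (N + 1) * x))
          atTop (nhds (2 * t ^ 2 * ε * x * Fbar x + 0)) := tendsto_const_nhds.add hlim
      rw [add_zero] at h1
      refine ge_of_tendsto' h1 fun N => ?_
      linarith [hsum N, hsumle N]
    have hHx : 0 < H x := hHpos x hxpos.le
    have hr1 : H (t * x) / H x ≤ 2 * t ^ 2 * ε := by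
      rw [div_le_iff₀ hHx]
      have hl := hlow x hxpos.le
      have hnn' : (0 : ℝ) ≤ 2 * t ^ 2 * ε := by positivity
      have h9 : 2 * t ^ 2 * ε * x * Fbar x = 2 * t ^ 2 * ε * (x * Fbar x) := by ring
      have h10 := mul_le_mul_of_nonneg_left hl hnn'
      linarith
    have hr2 : 2 * t ^ 2 * ε ≤ δ / 2 := by
      have h1 : 2 * t ^ 2 * ε ≤ 2 * t ^ 2 * (δ / (4 * t ^ 2)) :=
        mul_le_mul_of_nonneg_left hε1 (by positivity)
      have h2 : 2 * t ^ 2 * (δ / (4 * t ^ 2)) = δ / 2 := by field_simp; ring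
      linarith
    rw [Real.norm_eq_abs, abs_of_nonneg (div_nonneg (hHnn _) hHx.le)]
    linarith
  refine ⟨main, fun t ht => ?_⟩
  have h1 : Tendsto (fun x => H (t * x) / H x) atTop (nhdsWithin 0 (Set.Ioi 0)) := by
    refine tendsto_nhdsWithin_of_tendsto_nhds_of_eventually_within _ (main t ht) ?_
    filter_upwards [eventually_ge_atTop (0 : ℝ)] with x hx
    have ht0 : (0 : ℝ) < t := lt_trans one_pos ht
    exact div_pos (hHpos _ (by positivity)) (hHpos _ hx)
  have h2 : Tendsto (fun x => (H (t * x) / H x)⁻¹) atTop atTop := h1.inv_tendsto_nhdsGT_zero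
  refine h2.congr fun x => ?_
  rw [hS, hS, inv_div, one_div, one_div, div_eq_mul_inv, div_eq_mul_inv, inv_inv, mul_comm]
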